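/- Let S ⊆ ℕ contain a nonzero element and be closed under addition, let e = gcd S, let d ≥ 1 be an integer, and let h : ℕ → ℝ≥0 satisfy h(k + s) ≥ h(k) for every k ∈ ℕ and every s ∈ S. Fix a positive integer p and set e_p = e / gcd(p, e). Then for every f ∈ ℕ, limsup_{m→∞} d!·h(p·f + m·p·e_p)/(f + m·e_p)^d = p^d · limsup_{m→∞} d!·h(p·f + m·e)/(p·f + m·e)^d, both limsups taken in [0, ∞]. -/

import Mathlib

open Filter
open scoped ENNReal NNReal

lemma upsH_mul_mem {S : Set ℕ} (hSadd : ∀ a ∈ S, ∀ b ∈ S, a + b ∈ S) :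
    ∀ n : ℕ, ∀ u ∈ insert 0 S, n * u ∈ insert (0:ℕ) S := by
  intro n
  induction n with
  | zero => intro u hu; simp
  | succ k ih =>
      intro u hu
      have hk := ih u hu
      have : (k + 1) * u = k * u + u := by ring
      rw [this]
      rcases hk with hk | hk
      · simp only [Set.mem_insert_iff] at hk ⊢
        rw [hk, zero_add]
        rcases hu with hu | hu
        · exact Or.inl hu
        · exact Or.inr hu
      · rcases hu with hu | hu
        · simp [hu, hk]
        · exact Or.inr (hSadd _ hk _ hu)

lemma upsH_add_mem {S : Set ℕ} (hSadd : ∀ a ∈ S, ∀ b ∈ S, a + b ∈ S) :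
    ∀ u ∈ insert 0 S, ∀ v ∈ insert 0 S, u + v ∈ insert (0:ℕ) S := by
  rintro u (rfl | hu) v (rfl | hv)
  · simp
  · simp [hv]
  · simp [hu]
  · exact Or.inr (hSadd _ hu _ hv)

lemma upsH_exists_rep (S : Set ℕ) (hS0 : ∃ n ∈ S, n ≠ 0)
    (hSadd : ∀ a ∈ S, ∀ b ∈ S, a + b ∈ S) (e : ℕ)
    (he : (∀ s ∈ S, e ∣ s) ∧ ∀ c : ℕ, (∀ s ∈ S, c ∣ s) → c ∣ e) :
    ∃ u ∈ insert 0 S, ∃ v ∈ insert (0:ℕ) S, u = v + e := by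
  set M := insert (0:ℕ) S with hM
  set D : Set ℕ := {k | 0 < k ∧ ∃ u ∈ M, ∃ v ∈ M, u = v + k} with hD
  obtain ⟨s₀, hs₀, hs₀0⟩ := hS0
  have hs₀D : s₀ ∈ D := ⟨Nat.pos_of_ne_zero hs₀0, s₀, Or.inr hs₀, 0, Or.inl rfl, by ring⟩
  have hne : D.Nonempty := ⟨s₀, hs₀D⟩
  have hcD : sInf D ∈ D := Nat.sInf_mem hne
  obtain ⟨hcpos, u, hu, v, hv, huv⟩ := hcD
  set c := sInf D with hc
  have hcdvd : ∀ s ∈ S, c ∣ s := by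
    intro s hs
    by_contra hnd
    have hr0 : s % c ≠ 0 := fun h0 => hnd (Nat.dvd_of_mod_eq_zero h0)
    have hrc : s % c < c := Nat.mod_lt _ hcpos
    have hrD : s % c ∈ D := by
      refine ⟨Nat.pos_of_ne_zero hr0, s + (s / c) * v, ?_, (s / c) * u, ?_, ?_⟩
      · exact upsH_add_mem hSadd s (Or.inr hs) _ (upsH_mul_mem hSadd _ v hv)
      · exact upsH_mul_mem hSadd _ u hu
      · have h1 := Nat.div_add_mod s c
        rw [huv]
        nlinarith [h1]
    have := Nat.sInf_le hrD
    omega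
  have hce : c ∣ e := he.2 c hcdvd
  have heu : e ∣ u := by
    rcases hu with h | h
    · simp [h]
    · exact he.1 u h
  have hev : e ∣ v := by
    rcases hv with h | h
    · simp [h]
    · exact he.1 v h
  have hec : e ∣ c := by
    have : e ∣ u - v := Nat.dvd_sub heu hev
    have huvc : u - v = c := by omega
    rwa [huvc] at this
  have : c = e := Nat.dvd_antisymm hce hec
  exact ⟨u, hu, v, hv, by rw [huv, this]⟩

lemma upsH_exists_N (S : Set ℕ) (hS0 : ∃ n ∈ S, n ≠ 0)
    (hSadd : ∀ a ∈ S, ∀ b ∈ S, a + b ∈ S) (e : ℕ)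
    (he : (∀ s ∈ S, e ∣ s) ∧ ∀ c : ℕ, (∀ s ∈ S, c ∣ s) → c ∣ e) :
    ∃ N : ℕ, 0 < N ∧ ∀ n : ℕ, N ≤ n → n * e ∈ S := by
  obtain ⟨s₀, hs₀, hs₀0⟩ := hS0
  have hepos : 0 < e := by
    rcases Nat.eq_zero_or_pos e with h | h
    · exfalso; have := he.1 s₀ hs₀; rw [h] at this; exact hs₀0 (Nat.eq_zero_of_zero_dvd this)
    · exact h
  obtain ⟨u, hu, v, hv, huv⟩ := upsH_exists_rep S ⟨s₀, hs₀, hs₀0⟩ hSadd e he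
  have hev : e ∣ v := by
    rcases hv with h | h
    · simp [h]
    · exact he.1 v h
  obtain ⟨w, hw⟩ := hev
  refine ⟨w * w + 1, Nat.succ_pos _, ?_⟩
  intro n hn
  rcases Nat.eq_zero_or_pos w with hw0 | hwpos
  · -- v = 0, so u = e ∈ S, and n * e ∈ S for n ≥ 1
    have hv0 : v = 0 := by rw [hw, hw0, Nat.mul_zero]
    have hue : u = e := by rw [huv, hv0, Nat.zero_add]
    have heS : e ∈ S := by
      rcases hu with h | h
      · omega
      · rwa [hue] at h
    have : n * e ∈ insert (0:ℕ) S := upsH_mul_mem hSadd n e (Or.inr heS)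
    rcases this with h | h
    · exfalso; have : 0 < n * e := Nat.mul_pos (by omega) hepos; omega
    · exact h
  · set C := n / w with hC
    set a := n % w with ha
    have hdm : w * C + a = n := Nat.div_add_mod n w
    have haw : a < w := Nat.mod_lt _ hwpos
    have hwC : w ≤ C := by
      rw [hC, Nat.le_div_iff_mul_le hwpos]
      nlinarith
    have haC : a ≤ C := by omega
    obtain ⟨b, hb⟩ : ∃ b, C = a + b := ⟨C - a, by omega⟩
    have hne : n * e = a * u + b * v := by
      have hn' : n = w * (a + b) + a := by rw [← hb]; omega
      calc n * e = (w * (a + b) + a) * e := by rw [← hn']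
        _ = a * (e * w + e) + b * (e * w) := by ring
        _ = a * u + b * v := by rw [huv, hw]
    have hmem : n * e ∈ insert (0:ℕ) S := by
      rw [hne]
      exact upsH_add_mem hSadd _ (upsH_mul_mem hSadd a u hu) _ (upsH_mul_mem hSadd b v hv)
    rcases hmem with h | h
    · exfalso; have : 0 < n * e := Nat.mul_pos (by omega) hepos; omega
    · exact h

lemma upsH_aux_div {a x A B : ℝ≥0∞} (ha : a ≠ ⊤) (hB : a * B ≤ A) : a * (x / A) ≤ x / B := by
  rcases eq_or_ne a 0 with rfl | ha0
  · simp
  · calc a * (x / A) = a * x / A := (mul_div_assoc a x A).symm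
      _ ≤ a * x / (a * B) := ENNReal.div_le_div le_rfl hB
      _ = x / B := ENNReal.mul_div_mul_left x B ha0 ha

theorem upsilon_homogeneity (S : Set ℕ)
    (hS0 : ∃ n ∈ S, n ≠ 0)
    (hSadd : ∀ a ∈ S, ∀ b ∈ S, a + b ∈ S)
    (e : ℕ)
    (he : (∀ s ∈ S, e ∣ s) ∧ ∀ c : ℕ, (∀ s ∈ S, c ∣ s) → c ∣ e)
    (d : ℕ) (hd : 1 ≤ d)
    (h : ℕ → ℝ≥0)
    (hmono : ∀ k : ℕ, ∀ s ∈ S, h k ≤ h (k + s))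
    (p : ℕ) (hp : 0 < p) :
    ∀ f : ℕ,
      limsup (fun m : ℕ =>
          (Nat.factorial d : ℝ≥0∞) * (h (p * f + m * p * (e / Nat.gcd p e)) : ℝ≥0∞)
            / ((f + m * (e / Nat.gcd p e) : ℕ) : ℝ≥0∞) ^ d) atTop
        = (p : ℝ≥0∞) ^ d *
          limsup (fun m : ℕ =>
            (Nat.factorial d : ℝ≥0∞) * (h (p * f + m * e) : ℝ≥0∞)
              / ((p * f + m * e : ℕ) : ℝ≥0∞) ^ d) atTop := by
  intro f
  obtain ⟨N, hNpos, hNe⟩ := upsH_exists_N S hS0 hSadd e he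
  obtain ⟨s₀, hs₀, hs₀0⟩ := hS0
  have hepos : 0 < e := by
    rcases Nat.eq_zero_or_pos e with h0 | h0
    · exfalso; have := he.1 s₀ hs₀; rw [h0] at this
      exact hs₀0 (Nat.eq_zero_of_zero_dvd this)
    · exact h0
  set g0 := Nat.gcd p e with hg0
  have hgpos : 0 < g0 := Nat.gcd_pos_of_pos_left e hp
  set q := p / g0 with hqdef
  set ep := e / g0 with hepdef
  have hq : 0 < q := Nat.div_pos (Nat.le_of_dvd hp (Nat.gcd_dvd_left p e)) hgpos
  have hep : 0 < ep := Nat.div_pos (Nat.le_of_dvd hepos (Nat.gcd_dvd_right p e)) hgpos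
  have hkey : p * ep = q * e := by
    have h1 : g0 ∣ p := Nat.gcd_dvd_left p e
    have h2 : g0 ∣ e := Nat.gcd_dvd_right p e
    have e1 : ep * g0 = e := Nat.div_mul_cancel h2
    have e2 : q * g0 = p := Nat.div_mul_cancel h1
    have : p * ep * g0 = q * e * g0 := by
      calc p * ep * g0 = p * (ep * g0) := by ring
        _ = p * e := by rw [e1]
        _ = q * g0 * e := by rw [e2]
        _ = q * e * g0 := by ring
    exact Nat.eq_of_mul_eq_mul_right hgpos this
  set G : ℕ → ℝ≥0∞ := fun m =>
    (Nat.factorial d : ℝ≥0∞) * (h (p * f + m * e) : ℝ≥0∞)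
      / ((p * f + m * e : ℕ) : ℝ≥0∞) ^ d with hG
  have hp0 : ((p : ℝ≥0∞)) ^ d ≠ 0 := by
    apply pow_ne_zero
    exact Nat.cast_ne_zero.mpr hp.ne'
  have hptop : ((p : ℝ≥0∞)) ^ d ≠ ⊤ := ENNReal.pow_ne_top (ENNReal.natCast_ne_top p)
  -- pointwise identification of the LHS
  have hpt : ∀ m : ℕ,
      (Nat.factorial d : ℝ≥0∞) * (h (p * f + m * p * ep) : ℝ≥0∞)
          / ((f + m * ep : ℕ) : ℝ≥0∞) ^ d
        = (p : ℝ≥0∞) ^ d * G (m * q) := by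
    intro m
    have harg : p * f + m * q * e = p * f + m * p * ep := by
      rw [mul_assoc m p ep, hkey]; ring
    have hden : p * f + m * p * ep = p * (f + m * ep) := by ring
    rw [hG]
    simp only
    rw [harg, hden, Nat.cast_mul, mul_pow, ← mul_div_assoc,
      ENNReal.mul_div_mul_left _ _ hp0 hptop]
  have hLHS : (fun m : ℕ =>
      (Nat.factorial d : ℝ≥0∞) * (h (p * f + m * p * ep) : ℝ≥0∞)
        / ((f + m * ep : ℕ) : ℝ≥0∞) ^ d)
      = fun m => (p : ℝ≥0∞) ^ d * G (m * q) := funext hpt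
  rw [hLHS, ENNReal.limsup_const_mul_of_ne_top hptop]
  congr 1
  have hut : Tendsto (fun m : ℕ => m * q) atTop atTop := by
    apply tendsto_atTop_atTop.mpr
    intro b
    exact ⟨b, fun aa haa => le_trans haa (Nat.le_mul_of_pos_right aa hq)⟩
  apply le_antisymm
  · have hh : (fun m : ℕ => G (m * q)) = G ∘ (fun m : ℕ => m * q) := rfl
    rw [hh, limsup_comp]
    exact limsup_le_limsup_of_le hut
  · apply ENNReal.le_of_forall_lt_one_mul_le
    intro a ha
    have hatop : a ≠ ⊤ := (ha.trans ENNReal.one_lt_top).ne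
    lift a to ℝ≥0 using hatop
    have ha1 : a < 1 := by exact_mod_cast ha
    set b : ℝ≥0 := a ^ ((d : ℝ)⁻¹) with hbdef
    have hdR : ((d : ℝ)) ≠ 0 := by
      have : d ≠ 0 := by omega
      exact_mod_cast this
    have hb1 : b < 1 := by
      rcases eq_or_ne a 0 with rfl | ha0
      · rw [hbdef, NNReal.zero_rpow (by positivity)]
        exact zero_lt_one
      · exact NNReal.rpow_lt_one ha1 (by positivity)
    have hbd : b ^ d = a := by
      rw [hbdef, ← NNReal.rpow_natCast (a ^ ((d : ℝ)⁻¹)) d, ← NNReal.rpow_mul,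
        inv_mul_cancel₀ hdR, NNReal.rpow_one]
    set c0 : ℕ := (N + q) * e with hc0
    set j : ℕ → ℕ := fun m => (m + N) / q + 1 with hj
    have hj1 : ∀ m, m + N ≤ j m * q := by
      intro m
      have h1 := Nat.div_add_mod (m + N) q
      have h2 : (m + N) % q < q := Nat.mod_lt _ hq
      calc m + N = q * ((m + N) / q) + (m + N) % q := h1.symm
        _ ≤ q * ((m + N) / q) + q := by omega
        _ = ((m + N) / q + 1) * q := by ring
        _ = j m * q := rfl
    have hj2 : ∀ m, j m * q ≤ m + N + q := by
      intro m
      have h1 : (m + N) / q * q ≤ m + N := Nat.div_mul_le_self _ _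
      calc j m * q = (m + N) / q * q + q := by rw [hj]; ring
        _ ≤ m + N + q := by omega
    have hjt : Tendsto j atTop atTop := by
      apply tendsto_atTop_atTop.mpr
      intro bb
      refine ⟨bb * q, fun aa haa => ?_⟩
      have hle : bb ≤ (aa + N) / q := (Nat.le_div_iff_mul_le hq).mpr (by omega)
      simp only [hj]
      omega
    set m₀ : ℕ := ⌈(b * (c0 : ℝ≥0) / (1 - b) : ℝ≥0)⌉₊ with hm₀
    have hkey2 : ∀ m : ℕ, m₀ ≤ m → (a : ℝ≥0∞) * G m ≤ ((fun m : ℕ => G (m * q)) ∘ j) m := by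
      intro m hm
      have hjmq : m + N ≤ j m * q := hj1 m
      have hsub : N ≤ j m * q - m := by omega
      have hSmem : (j m * q - m) * e ∈ S := hNe _ hsub
      have hargeq : p * f + m * e + (j m * q - m) * e = p * f + j m * q * e := by
        have hx : m * e + (j m * q - m) * e = j m * q * e := by
          rw [← Nat.add_mul]
          congr 1
          omega
        omega
      have hnum : h (p * f + m * e) ≤ h (p * f + j m * q * e) := by
        have hx := hmono (p * f + m * e) _ hSmem
        rwa [hargeq] at hx
      -- denominator bound
      have hle2 : p * f + j m * q * e ≤ p * f + m * e + c0 := by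
        have hx : j m * q * e ≤ (m + N + q) * e := Nat.mul_le_mul_right e (hj2 m)
        have hy : (m + N + q) * e = m * e + c0 := by rw [hc0]; ring
        omega
      -- NNReal inequality
      set X : ℝ≥0 := ((p * f + m * e : ℕ) : ℝ≥0) with hX
      have hm0 : (b * (c0 : ℝ≥0) / (1 - b) : ℝ≥0) ≤ (m : ℝ≥0) := by
        exact_mod_cast Nat.ceil_le.mp hm
      have hmX : (m : ℝ≥0) ≤ X := by
        rw [hX]
        have : m ≤ p * f + m * e := le_trans (Nat.le_mul_of_pos_right m hepos) (by omega)
        exact_mod_cast this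
      have hb0 : (0 : ℝ≥0) < 1 - b := tsub_pos_of_lt hb1
      have hbc : b * (c0 : ℝ≥0) ≤ (1 - b) * X := by
        have hx : b * (c0 : ℝ≥0) / (1 - b) ≤ X := le_trans hm0 hmX
        calc b * (c0 : ℝ≥0) = b * (c0 : ℝ≥0) / (1 - b) * (1 - b) :=
              (div_mul_cancel₀ _ hb0.ne').symm
          _ ≤ X * (1 - b) := mul_le_mul_left hx _
          _ = (1 - b) * X := mul_comm _ _
      have hbX : b * (X + (c0 : ℝ≥0)) ≤ X := by
        calc b * (X + (c0 : ℝ≥0)) = b * X + b * (c0 : ℝ≥0) := by ring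
          _ ≤ b * X + (1 - b) * X := add_le_add_right hbc _
          _ = (b + (1 - b)) * X := by ring
          _ = 1 * X := by rw [add_tsub_cancel_of_le hb1.le]
          _ = X := one_mul X
      have hfin : a * ((p * f + m * e + c0 : ℕ) : ℝ≥0) ^ d ≤ ((p * f + m * e : ℕ) : ℝ≥0) ^ d := by
        have hcast : ((p * f + m * e + c0 : ℕ) : ℝ≥0) = X + (c0 : ℝ≥0) := by
          rw [hX]; push_cast; ring
        rw [hcast, ← hX, ← hbd, ← mul_pow]
        exact pow_le_pow_left₀ (zero_le) hbX d
      have hden2 : (a : ℝ≥0∞) * (((p * f + j m * q * e : ℕ) : ℝ≥0∞)) ^ d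
          ≤ (((p * f + m * e : ℕ) : ℝ≥0∞)) ^ d := by
        calc (a : ℝ≥0∞) * (((p * f + j m * q * e : ℕ) : ℝ≥0∞)) ^ d
            ≤ (a : ℝ≥0∞) * (((p * f + m * e + c0 : ℕ) : ℝ≥0∞)) ^ d := by
              apply mul_le_mul_right
              apply pow_le_pow_left₀ (zero_le)
              exact_mod_cast Nat.cast_le.mpr hle2
          _ ≤ (((p * f + m * e : ℕ) : ℝ≥0∞)) ^ d := by exact_mod_cast hfin
      -- combine
      have hGm : G m = (Nat.factorial d : ℝ≥0∞) * (h (p * f + m * e) : ℝ≥0∞)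
          / ((p * f + m * e : ℕ) : ℝ≥0∞) ^ d := rfl
      have hGjm : ((fun m : ℕ => G (m * q)) ∘ j) m
          = (Nat.factorial d : ℝ≥0∞) * (h (p * f + j m * q * e) : ℝ≥0∞)
            / ((p * f + j m * q * e : ℕ) : ℝ≥0∞) ^ d := rfl
      rw [hGm, hGjm]
      calc (a : ℝ≥0∞) * ((Nat.factorial d : ℝ≥0∞) * (h (p * f + m * e) : ℝ≥0∞)
              / ((p * f + m * e : ℕ) : ℝ≥0∞) ^ d)
          ≤ (a : ℝ≥0∞) * ((Nat.factorial d : ℝ≥0∞) * (h (p * f + j m * q * e) : ℝ≥0∞)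
              / ((p * f + m * e : ℕ) : ℝ≥0∞) ^ d) := by
            apply mul_le_mul_right
            apply ENNReal.div_le_div _ le_rfl
            exact mul_le_mul_right (ENNReal.coe_le_coe.mpr hnum) _
        _ ≤ (Nat.factorial d : ℝ≥0∞) * (h (p * f + j m * q * e) : ℝ≥0∞)
              / ((p * f + j m * q * e : ℕ) : ℝ≥0∞) ^ d :=
            upsH_aux_div ENNReal.coe_ne_top hden2
    have hev : ∀ᶠ m in atTop, (a : ℝ≥0∞) * G m ≤ ((fun m : ℕ => G (m * q)) ∘ j) m :=
      eventually_atTop.mpr ⟨m₀, hkey2⟩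
    calc (a : ℝ≥0∞) * limsup G atTop
        = limsup (fun m => (a : ℝ≥0∞) * G m) atTop :=
          (ENNReal.limsup_const_mul_of_ne_top ENNReal.coe_ne_top).symm
      _ ≤ limsup ((fun m : ℕ => G (m * q)) ∘ j) atTop := limsup_le_limsup hev
      _ = limsup (fun m : ℕ => G (m * q)) (map j atTop) := limsup_comp _ _ _
      _ ≤ limsup (fun m : ℕ => G (m * q)) atTop := limsup_le_limsup_of_le hjt
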